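/- Let $\nu\in(0,1)$, $c>0$, $\lambda_-\le -1$, and define ${\mathcal C}(x) = -\frac{c\Gamma(-\nu)\sin(\pi\nu)}{\pi}\int_{-\infty}^{\lambda_-}\frac{e^{-xz}(-z+\lambda_-)^{\nu}}{z(z+1)}\,dz$ for $x\le 0$. Then ${\mathcal C}$ is strictly increasing and continuous on $(-\infty,0]$, satisfies $\lim_{x\to-\infty}{\mathcal C}(x)=0$, and ${\mathcal C}(0)<\infty$. Consequently, for every $r$ with $0<r<{\mathcal C}(0)$ there exists a unique $\bar h<0$ with ${\mathcal C}(\bar h)=r$. -/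

import Mathlib

open MeasureTheory Real Set Filter

lemma stmt6_g_cont (ν lm : ℝ) (hν0 : 0 < ν) (hlm : lm ≤ -1) :
    ContinuousOn (fun z : ℝ => (-z + lm) ^ ν / (z * (z + 1))) (Set.Iio lm) := by
  apply ContinuousOn.div
  · apply ContinuousOn.rpow_const (by fun_prop)
    intro z hz
    have hz' : z < lm := hz
    exact Or.inl (by linarith : (0:ℝ) < -z + lm).ne'
  · fun_prop
  · intro z hz
    have hz' : z < lm := hz
    have h1 : z < -1 := lt_of_lt_of_le hz' hlm
    have : 0 < z * (z + 1) := by nlinarith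
    positivity

lemma stmt6_g_int (ν lm : ℝ) (hν0 : 0 < ν) (hν1 : ν < 1) (hlm : lm ≤ -1) :
    IntegrableOn (fun z => (-z + lm) ^ ν / (z * (z + 1))) (Set.Iio lm) := by
  have hcont := stmt6_g_cont ν lm hν0 hlm
  have hsplit : Iio (lm - 1) ∪ Ico (lm - 1) lm = Iio lm :=
    Iio_union_Ico_eq_Iio (by linarith)
  rw [← hsplit, integrableOn_union]
  constructor
  · -- tail part
    have hcomp : IntegrableOn (fun z : ℝ => 2 * (-z) ^ (ν - 2)) (Iio (lm - 1)) := by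
      rw [← (Measure.measurePreserving_neg (volume : Measure ℝ)).integrableOn_comp_preimage
          (Homeomorph.neg ℝ).measurableEmbedding]
      simp only [Function.comp_def, neg_preimage, neg_Iio, neg_neg, neg_sub]
      exact (integrableOn_Ioi_rpow_of_lt (by linarith) (by linarith)).const_mul 2
    refine Integrable.mono' hcomp ((hcont.mono (Iio_subset_Iio (by linarith))).aestronglyMeasurable
      measurableSet_Iio) ?_
    filter_upwards [ae_restrict_mem measurableSet_Iio] with z hz
    have hz2 : z ≤ -2 := by simpa using (le_of_lt (lt_of_lt_of_le hz (by linarith)))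
    have hzneg : 0 < -z := by linarith
    have hd : (0:ℝ) < z * (z + 1) := by nlinarith
    have hA : (0:ℝ) < -z + lm := by have : z < lm := lt_trans hz (by linarith); linarith
    have hg0 : 0 ≤ (-z + lm) ^ ν / (z * (z + 1)) :=
      le_of_lt (div_pos (Real.rpow_pos_of_pos hA ν) hd)
    rw [Real.norm_of_nonneg hg0]
    have key : (-z + lm) ^ ν / (z * (z + 1)) ≤ (-z) ^ ν / (z ^ 2 / 2) := by
      apply div_le_div₀ (by positivity)
      · exact Real.rpow_le_rpow hA.le (by linarith) hν0.le
      · nlinarith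
      · nlinarith
    refine key.trans (le_of_eq ?_)
    have h1 : (-z) ^ (ν - 2) = (-z) ^ ν / (-z) ^ (2:ℝ) := Real.rpow_sub hzneg ν 2
    have h2 : (-z) ^ (2:ℝ) = z ^ 2 := by
      rw [show (2:ℝ) = ((2:ℕ):ℝ) by norm_num, Real.rpow_natCast]; ring
    rw [h1, h2]
    field_simp
  · -- part near lm
    rw [integrableOn_Ico_iff_integrableOn_Ioo]
    have hcomp : IntegrableOn (fun z : ℝ => (-1 - z) ^ (ν - 1)) (Ioo (lm - 1) lm) := by
      have h := (intervalIntegral.intervalIntegrable_rpow' (r := ν - 1) (by linarith)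
        (a := -1 - (lm - 1)) (b := -1 - lm)).comp_sub_left (-1)
      rw [intervalIntegrable_iff] at h
      refine h.mono_set ?_
      rw [uIoc_of_le (by linarith)]
      simp only [sub_sub_cancel]
      intro t ht
      exact ⟨ht.1, ht.2.le⟩
    refine Integrable.mono' hcomp ((hcont.mono ?_).aestronglyMeasurable measurableSet_Ioo) ?_
    · intro t ht; exact ht.2
    filter_upwards [ae_restrict_mem measurableSet_Ioo] with z hz
    have hzlm : z < lm := hz.2
    have hz1 : z < -1 := lt_of_lt_of_le hzlm hlm
    have hdpos : (0:ℝ) < -1 - z := by linarith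
    have hA : (0:ℝ) < -z + lm := by linarith
    have hD : (0:ℝ) < z * (z + 1) := by nlinarith
    have hg0 : 0 ≤ (-z + lm) ^ ν / (z * (z + 1)) :=
      le_of_lt (div_pos (Real.rpow_pos_of_pos hA ν) hD)
    rw [Real.norm_of_nonneg hg0]
    have key : (-z + lm) ^ ν / (z * (z + 1)) ≤ (-1 - z) ^ ν / (-1 - z) := by
      apply div_le_div₀ (by positivity)
      · exact Real.rpow_le_rpow hA.le (by linarith) hν0.le
      · exact hdpos
      · nlinarith
    refine key.trans (le_of_eq ?_)
    rw [Real.rpow_sub hdpos, Real.rpow_one]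

lemma stmt6_F_cont (ν lm x : ℝ) (hν0 : 0 < ν) (hlm : lm ≤ -1) :
    ContinuousOn (fun z : ℝ => Real.exp (-x * z) * (-z + lm) ^ ν / (z * (z + 1)))
      (Set.Iio lm) := by
  apply ContinuousOn.div
  · apply ContinuousOn.mul (by fun_prop)
    apply ContinuousOn.rpow_const (by fun_prop)
    intro z hz
    have hz' : z < lm := hz
    exact Or.inl (by linarith : (0:ℝ) < -z + lm).ne'
  · fun_prop
  · intro z hz
    have hz' : z < lm := hz
    have h1 : z < -1 := lt_of_lt_of_le hz' hlm
    have : 0 < z * (z + 1) := by nlinarith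
    positivity

lemma stmt6_F_bound (ν lm x : ℝ) (hν0 : 0 < ν) (hlm : lm ≤ -1) (hx : x ≤ 0)
    {z : ℝ} (hz : z < lm) :
    Real.exp (-x * z) * (-z + lm) ^ ν / (z * (z + 1)) ≤ (-z + lm) ^ ν / (z * (z + 1)) := by
  have hz1 : z < -1 := lt_of_lt_of_le hz hlm
  have hA : (0:ℝ) < -z + lm := by linarith
  have hD : (0:ℝ) < z * (z + 1) := by nlinarith
  have hexp : Real.exp (-x * z) ≤ 1 := by
    rw [Real.exp_le_one_iff]
    have : (0:ℝ) ≤ -x := by linarith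
    nlinarith
  rw [div_le_div_iff₀ hD hD]
  have h0 : (0:ℝ) ≤ (-z + lm) ^ ν := (Real.rpow_pos_of_pos hA ν).le
  nlinarith [mul_nonneg (mul_nonneg (sub_nonneg.mpr hexp) h0) hD.le]

lemma stmt6_F_pos (ν lm x : ℝ) (hν0 : 0 < ν) (hlm : lm ≤ -1)
    {z : ℝ} (hz : z < lm) :
    0 < Real.exp (-x * z) * (-z + lm) ^ ν / (z * (z + 1)) := by
  have hz1 : z < -1 := lt_of_lt_of_le hz hlm
  have hA : (0:ℝ) < -z + lm := by linarith
  have hD : (0:ℝ) < z * (z + 1) := by nlinarith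
  exact div_pos (mul_pos (Real.exp_pos _) (Real.rpow_pos_of_pos hA ν)) hD

lemma stmt6_F_int (ν lm : ℝ) (hν0 : 0 < ν) (hν1 : ν < 1) (hlm : lm ≤ -1)
    {x : ℝ} (hx : x ≤ 0) :
    IntegrableOn (fun z => Real.exp (-x * z) * (-z + lm) ^ ν / (z * (z + 1))) (Set.Iio lm) := by
  refine Integrable.mono' (stmt6_g_int ν lm hν0 hν1 hlm)
    ((stmt6_F_cont ν lm x hν0 hlm).aestronglyMeasurable measurableSet_Iio) ?_
  filter_upwards [ae_restrict_mem measurableSet_Iio] with z hz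
  rw [Real.norm_of_nonneg (stmt6_F_pos ν lm x hν0 hlm hz).le]
  exact stmt6_F_bound ν lm x hν0 hlm hx hz

theorem stmt6 (ν c lm : ℝ) (hν : ν ∈ Set.Ioo (0:ℝ) 1) (hc : 0 < c) (hlm : lm ≤ -1)
    (C : ℝ → ℝ)
    (hC : ∀ x, C x = -(c * Real.Gamma (-ν) * Real.sin (π * ν) / π) *
        ∫ z in Set.Iio lm, Real.exp (-x * z) * (-z + lm) ^ ν / (z * (z + 1))) :
    StrictMonoOn C (Set.Iic 0) ∧
    ContinuousOn C (Set.Iic 0) ∧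
    Tendsto C atBot (nhds 0) ∧
    IntegrableOn (fun z => (-z + lm) ^ ν / (z * (z + 1))) (Set.Iio lm) ∧
    ∀ r : ℝ, 0 < r → r < C 0 → ∃! h : ℝ, h < 0 ∧ C h = r := by
  obtain ⟨hν0, hν1⟩ := hν
  set K : ℝ := -(c * Real.Gamma (-ν) * Real.sin (π * ν) / π) with hK
  -- positivity of the prefactor
  have hGamma : Real.Gamma (-ν) < 0 := by
    have h1 : 0 < Real.Gamma (1 - ν) := Real.Gamma_pos_of_pos (by linarith)
    have h2 : Real.Gamma (-ν + 1) = -ν * Real.Gamma (-ν) :=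
      Real.Gamma_add_one (by linarith)
    rw [show -ν + 1 = 1 - ν by ring] at h2
    nlinarith
  have hsin : 0 < Real.sin (π * ν) :=
    Real.sin_pos_of_pos_of_lt_pi (by positivity)
      (by nlinarith [Real.pi_pos])
  have hKpos : 0 < K := by
    have h1 : c * Real.Gamma (-ν) * Real.sin (π * ν) < 0 :=
      mul_neg_of_neg_of_pos (mul_neg_of_pos_of_neg hc hGamma) hsin
    have h2 : c * Real.Gamma (-ν) * Real.sin (π * ν) / π < 0 :=
      div_neg_of_neg_of_pos h1 Real.pi_pos
    simpa [hK] using h2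
  set I : ℝ → ℝ := fun x => ∫ z in Set.Iio lm, Real.exp (-x * z) * (-z + lm) ^ ν / (z * (z + 1))
    with hI
  have hCI : ∀ x, C x = K * I x := hC
  -- strict monotonicity of I on Iic 0
  have hImono : StrictMonoOn I (Set.Iic 0) := by
    intro a ha b hb hab
    have hia := stmt6_F_int ν lm hν0 hν1 hlm (le_trans hab.le hb)
    have hib := stmt6_F_int ν lm hν0 hν1 hlm hb
    have hdiff : 0 < ∫ z in Set.Iio lm,
        (Real.exp (-b * z) * (-z + lm) ^ ν / (z * (z + 1)) -
         Real.exp (-a * z) * (-z + lm) ^ ν / (z * (z + 1))) := by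
      rw [setIntegral_pos_iff_support_of_nonneg_ae]
      · refine lt_of_lt_of_le (b := volume (Iio lm)) ?_ (measure_mono ?_)
        · rw [Real.volume_Iio]; exact ENNReal.zero_lt_top
        · intro z hz
          refine ⟨?_, hz⟩
          have hzlt : z < lm := hz
          have hz1 : z < -1 := lt_of_lt_of_le hzlt hlm
          have hA : (0:ℝ) < -z + lm := by linarith
          have hD : (0:ℝ) < z * (z + 1) := by nlinarith
          have hexp : Real.exp (-a * z) < Real.exp (-b * z) := by
            apply Real.exp_lt_exp.mpr
            nlinarith
          have : 0 < Real.exp (-b * z) * (-z + lm) ^ ν / (z * (z + 1)) -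
              Real.exp (-a * z) * (-z + lm) ^ ν / (z * (z + 1)) := by
            rw [div_sub_div_same]
            apply div_pos _ hD
            have := Real.rpow_pos_of_pos hA ν
            nlinarith
          simp only [Function.mem_support]
          exact this.ne'
      · filter_upwards [ae_restrict_mem measurableSet_Iio] with z hz
        have hz1 : z < -1 := lt_of_lt_of_le (show z < lm from hz) hlm
        have hA : (0:ℝ) < -z + lm := by
          have : z < lm := hz
          linarith
        have hD : (0:ℝ) < z * (z + 1) := by nlinarith
        have hexp : Real.exp (-a * z) ≤ Real.exp (-b * z) := by
          apply Real.exp_le_exp.mpr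
          nlinarith
        have := Real.rpow_pos_of_pos hA ν
        rw [div_sub_div_same]
        apply div_nonneg _ hD.le
        nlinarith
      · exact hib.sub hia
    rw [integral_sub hib hia] at hdiff
    have : I a < I b := by
      simp only [hI]
      linarith
    simp only [hCI] at *
    exact this
  have hCmono : StrictMonoOn C (Set.Iic 0) := by
    intro a ha b hb hab
    rw [hCI a, hCI b]
    exact (mul_lt_mul_iff_right₀ hKpos).mpr (hImono ha hb hab)
  -- continuity
  have hIcont : ContinuousOn I (Set.Iic 0) := by
    intro x0 hx0
    have := MeasureTheory.tendsto_integral_filter_of_dominated_convergence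
      (μ := volume.restrict (Set.Iio lm))
      (l := nhdsWithin x0 (Set.Iic 0))
      (F := fun x z => Real.exp (-x * z) * (-z + lm) ^ ν / (z * (z + 1)))
      (f := fun z => Real.exp (-x0 * z) * (-z + lm) ^ ν / (z * (z + 1)))
      (bound := fun z => (-z + lm) ^ ν / (z * (z + 1)))
      (Eventually.of_forall fun x =>
        (stmt6_F_cont ν lm x hν0 hlm).aestronglyMeasurable measurableSet_Iio)
      (by
        filter_upwards [eventually_mem_nhdsWithin] with x hx
        filter_upwards [ae_restrict_mem measurableSet_Iio] with z hz
        rw [Real.norm_of_nonneg (stmt6_F_pos ν lm x hν0 hlm hz).le]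
        exact stmt6_F_bound ν lm x hν0 hlm hx hz)
      (stmt6_g_int ν lm hν0 hν1 hlm)
      (by
        filter_upwards [ae_restrict_mem measurableSet_Iio] with z hz
        have : Continuous fun x : ℝ => Real.exp (-x * z) * (-z + lm) ^ ν / (z * (z + 1)) := by
          fun_prop
        exact (this.tendsto x0).mono_left nhdsWithin_le_nhds)
    exact this
  have hCcont : ContinuousOn C (Set.Iic 0) :=
    (continuousOn_const.mul hIcont).congr fun x _ => hCI x
  -- limit at -∞
  have hIlim : Tendsto I atBot (nhds 0) := by
    have := MeasureTheory.tendsto_integral_filter_of_dominated_convergence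
      (μ := volume.restrict (Set.Iio lm))
      (l := (atBot : Filter ℝ))
      (F := fun x z => Real.exp (-x * z) * (-z + lm) ^ ν / (z * (z + 1)))
      (f := fun _ => (0:ℝ))
      (bound := fun z => (-z + lm) ^ ν / (z * (z + 1)))
      (Eventually.of_forall fun x =>
        (stmt6_F_cont ν lm x hν0 hlm).aestronglyMeasurable measurableSet_Iio)
      (by
        filter_upwards [eventually_le_atBot (0:ℝ)] with x hx
        filter_upwards [ae_restrict_mem measurableSet_Iio] with z hz
        rw [Real.norm_of_nonneg (stmt6_F_pos ν lm x hν0 hlm hz).le]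
        exact stmt6_F_bound ν lm x hν0 hlm hx hz)
      (stmt6_g_int ν lm hν0 hν1 hlm)
      (by
        filter_upwards [ae_restrict_mem measurableSet_Iio] with z hz
        have hz1 : z < -1 := lt_of_lt_of_le (show z < lm from hz) hlm
        have hzneg : 0 < -z := by linarith
        have h1 : Tendsto (fun x : ℝ => -x * z) atBot atBot := by
          have : Tendsto (fun x : ℝ => x * (-z)) atBot atBot :=
            Tendsto.atBot_mul_const hzneg tendsto_id
          refine this.congr fun x => by ring
        have h2 : Tendsto (fun x : ℝ => Real.exp (-x * z)) atBot (nhds 0) :=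
          Real.tendsto_exp_atBot.comp h1
        have h3 : Tendsto (fun x : ℝ => Real.exp (-x * z) * (-z + lm) ^ ν / (z * (z + 1)))
            atBot (nhds (0 * (-z + lm) ^ ν / (z * (z + 1)))) := by
          exact (h2.mul_const _).div_const _
        simpa using h3)
    simpa only [integral_zero] using this
  have hClim : Tendsto C atBot (nhds 0) := by
    have : Tendsto (fun x => K * I x) atBot (nhds (K * 0)) := hIlim.const_mul K
    rw [mul_zero] at this
    exact this.congr fun x => (hCI x).symm
  refine ⟨hCmono, hCcont, hClim, stmt6_g_int ν lm hν0 hν1 hlm, ?_⟩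
  intro r hr hrC
  have hev : ∀ᶠ x in (atBot : Filter ℝ), C x < r ∧ x ≤ 0 :=
    (hClim.eventually (eventually_lt_nhds hr)).and (eventually_le_atBot 0)
  obtain ⟨x0, hx0r, hx00⟩ := hev.exists
  have hsub : Icc x0 0 ⊆ Iic (0:ℝ) := fun t ht => ht.2
  have hIVT := intermediate_value_Icc hx00 (hCcont.mono hsub)
  have hrmem : r ∈ Icc (C x0) (C 0) := ⟨hx0r.le, hrC.le⟩
  obtain ⟨h, hh, hCh⟩ := hIVT hrmem
  have hhne : h ≠ 0 := by
    intro heq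
    rw [heq] at hCh
    exact absurd hCh.symm (ne_of_gt hrC).symm
  have hhlt : h < 0 := lt_of_le_of_ne hh.2 hhne
  refine ⟨h, ⟨hhlt, hCh⟩, ?_⟩
  rintro h' ⟨hh'lt, hCh'⟩
  exact hCmono.injOn (le_of_lt hh'lt) (le_of_lt hhlt) (by rw [hCh', hCh])
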